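/- Let G = (V,E) be a finite simple graph with maximum degree at most Δ, and fix a linear order ≺ on V. Consider the greedy procedure: start with S = ∅; while the closed neighborhood N[S] does not cover V, add to S the ≺-least vertex among the vertices v maximizing the number of newly dominated vertices |N[v] \ N[S]|. Then the procedure terminates with a dominating set S of G satisfying |S| ≤ H(Δ+1)·γ(G), where H(k) = Σ_{i=1}^{k} 1/i is the k-th harmonic number. -/

import Mathlib

/-- A dominating set of a graph `G`: every vertex either lies in `S` or is adjacent to a
vertex of `S`. -/
def IsDomSet {V : Type} (G : SimpleGraph V) (S : Set V) : Prop :=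
  ∀ v : V, v ∈ S ∨ ∃ u ∈ S, G.Adj u v

/-- `γ(G)`: the minimum cardinality of a dominating set of the finite graph `G`. -/
noncomputable def dominationNumber {V : Type} [Fintype V] (G : SimpleGraph V) : ℕ :=
  sInf {n : ℕ | ∃ S : Set V, IsDomSet G S ∧ S.ncard = n}

open Classical in
/-- The closed neighborhood `N[S]` of a finite set of vertices, as a `Finset`. -/
noncomputable def closedNbhdF {V : Type} [Fintype V] (G : SimpleGraph V)
    (S : Finset V) : Finset V :=
  S ∪ Finset.univ.filter (fun w => ∃ u ∈ S, G.Adj u w)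

open Classical in
/-- The number `|N[v] \ N[S]|` of vertices newly dominated when `v` is added to `S`. -/
noncomputable def greedyGain {V : Type} [Fintype V] (G : SimpleGraph V)
    (S : Finset V) (v : V) : ℕ :=
  (closedNbhdF G {v} \ closedNbhdF G S).card

open Classical in
/-- One step of the greedy procedure: if `N[S]` does not yet cover `V`, add the least
vertex (in the fixed linear order) among the vertices maximizing the number of newly
dominated vertices `|N[v] \ N[S]|`. -/
noncomputable def greedyStep {V : Type} [Fintype V] [LinearOrder V]
    (G : SimpleGraph V) (S : Finset V) : Finset V :=
  if closedNbhdF G S = Finset.univ then S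
  else
    let maximizers :=
      Finset.univ.filter (fun v => greedyGain G S v = Finset.univ.sup (greedyGain G S))
    if h : maximizers.Nonempty then insert (maximizers.min' h) S else S

/-- The greedy procedure, started from `S = ∅` (it terminates within `|V|` steps). -/
noncomputable def greedyDomSet {V : Type} [Fintype V] [LinearOrder V]
    (G : SimpleGraph V) : Finset V :=
  (greedyStep G)^[Fintype.card V] ∅

section Aux
variable {V : Type} [Fintype V] [DecidableEq V] (G : SimpleGraph V)

omit [DecidableEq V] in
lemma mem_cnf {S : Finset V} {w : V} :
    w ∈ closedNbhdF G S ↔ w ∈ S ∨ ∃ u ∈ S, G.Adj u w := by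
  classical
  simp [closedNbhdF]

lemma cnf_mono {S T : Finset V} (h : S ⊆ T) : closedNbhdF G S ⊆ closedNbhdF G T := by
  intro w hw
  rw [mem_cnf] at hw ⊢
  rcases hw with hw | ⟨u, hu, hadj⟩
  · exact Or.inl (h hw)
  · exact Or.inr ⟨u, h hu, hadj⟩

lemma cnf_insert (v : V) (S : Finset V) :
    closedNbhdF G (insert v S) = closedNbhdF G {v} ∪ closedNbhdF G S := by
  ext w
  simp only [Finset.mem_union, mem_cnf, Finset.mem_insert, Finset.mem_singleton]
  aesop

lemma cnf_empty : closedNbhdF G (∅ : Finset V) = ∅ := by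
  ext w; simp [mem_cnf]

lemma cnf_singleton_card {Δ : ℕ} (hdeg : ∀ v : V, (G.neighborSet v).ncard ≤ Δ) (v : V) :
    (closedNbhdF G {v}).card ≤ Δ + 1 := by
  classical
  have hsub : closedNbhdF G {v} ⊆ insert v (G.neighborSet v).toFinset := by
    intro w hw
    rw [mem_cnf] at hw
    rcases hw with hw | ⟨u, hu, hadj⟩
    · simp only [Finset.mem_singleton] at hw
      simp [hw]
    · simp only [Finset.mem_singleton] at hu; subst hu
      simp [SimpleGraph.mem_neighborSet, hadj]
  calc (closedNbhdF G {v}).card ≤ (insert v (G.neighborSet v).toFinset).card :=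
        Finset.card_le_card hsub
    _ ≤ (G.neighborSet v).toFinset.card + 1 := Finset.card_insert_le _ _
    _ ≤ Δ + 1 := by
        have h := hdeg v
        rw [Set.ncard_eq_toFinset_card'] at h
        omega

end Aux

section Greedy
variable {V : Type} [Fintype V] [LinearOrder V] (G : SimpleGraph V)

lemma greedyGain_eq (S : Finset V) (v : V) :
    greedyGain G S v = (closedNbhdF G {v} \ closedNbhdF G S).card := by
  unfold greedyGain
  congr 1
  ext e
  simp [Finset.mem_sdiff]

lemma greedyStep_covered (S : Finset V) (h : closedNbhdF G S = Finset.univ) :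
    greedyStep G S = S := by
  unfold greedyStep
  rw [if_pos h]

lemma greedyStep_subset (S : Finset V) : S ⊆ greedyStep G S := by
  unfold greedyStep
  split
  · exact Finset.Subset.refl _
  · dsimp only
    split
    · exact Finset.subset_insert _ _
    · exact Finset.Subset.refl _

lemma greedyStep_eq_insert (S : Finset V) (h : closedNbhdF G S ≠ Finset.univ) :
    ∃ v, greedyStep G S = insert v S ∧ ∀ w, greedyGain G S w ≤ greedyGain G S v := by
  classical
  obtain ⟨x, hx⟩ : ∃ x, x ∉ closedNbhdF G S := by
    by_contra hc; push_neg at hc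
    exact h (Finset.eq_univ_iff_forall.mpr hc)
  haveI : Nonempty V := ⟨x⟩
  obtain ⟨v0, -, hv0⟩ :=
    Finset.exists_mem_eq_sup Finset.univ Finset.univ_nonempty (greedyGain G S)
  have hM : (Finset.univ.filter
      (fun v => greedyGain G S v = Finset.univ.sup (greedyGain G S))).Nonempty :=
    ⟨v0, by simp [hv0.symm]⟩
  set v := (Finset.univ.filter
      (fun v => greedyGain G S v = Finset.univ.sup (greedyGain G S))).min' hM with hv
  have hvmem := Finset.min'_mem _ hM
  rw [Finset.mem_filter] at hvmem
  refine ⟨v, ?_, ?_⟩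
  · unfold greedyStep
    rw [if_neg h, dif_pos hM]
  · intro w
    rw [hvmem.2]
    exact Finset.le_sup (Finset.mem_univ w)

/-- the greedy set after `t` steps -/
noncomputable def gS (t : ℕ) : Finset V := (greedyStep G)^[t] ∅

/-- the set of vertices newly covered at step `t` -/
noncomputable def gC (t : ℕ) : Finset V :=
  closedNbhdF G (gS G (t+1)) \ closedNbhdF G (gS G t)

lemma gS_succ (t : ℕ) : gS G (t+1) = greedyStep G (gS G t) :=
  Function.iterate_succ_apply' _ _ _

lemma cnf_gS_mono (t : ℕ) :
    closedNbhdF G (gS G t) ⊆ closedNbhdF G (gS G (t+1)) := by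
  apply cnf_mono
  rw [gS_succ]
  exact greedyStep_subset G _

lemma gain_le_gC_card (t : ℕ) (w : V) : greedyGain G (gS G t) w ≤ (gC G t).card := by
  by_cases h : closedNbhdF G (gS G t) = Finset.univ
  · have hz : closedNbhdF G {w} \ closedNbhdF G (gS G t) = ∅ := by
      rw [h]; simp
    rw [greedyGain_eq, hz]
    simp
  · obtain ⟨v, hv, hmax⟩ := greedyStep_eq_insert G _ h
    have hC : gC G t = closedNbhdF G {v} \ closedNbhdF G (gS G t) := by
      unfold gC
      rw [gS_succ, hv, cnf_insert]
      ext e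
      simp only [Finset.mem_sdiff, Finset.mem_union]
      tauto
    rw [hC, ← greedyGain_eq]
    exact hmax w

lemma gC_progress (t : ℕ) (h : closedNbhdF G (gS G t) ≠ Finset.univ) :
    1 ≤ (gC G t).card := by
  obtain ⟨x, hx⟩ : ∃ x, x ∉ closedNbhdF G (gS G t) := by
    by_contra hc; push_neg at hc
    exact h (Finset.eq_univ_iff_forall.mpr hc)
  have hgain : 1 ≤ greedyGain G (gS G t) x := by
    rw [greedyGain_eq]
    refine Nat.one_le_iff_ne_zero.mpr (Finset.card_ne_zero_of_mem (a := x) ?_)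
    rw [Finset.mem_sdiff, mem_cnf]
    exact ⟨Or.inl (Finset.mem_singleton_self x), hx⟩
  exact hgain.trans (gain_le_gC_card G t x)

lemma card_cnf_succ (t : ℕ) :
    (closedNbhdF G (gS G (t+1))).card
      = (closedNbhdF G (gS G t)).card + (gC G t).card := by
  have h := Finset.card_sdiff_add_card_eq_card (cnf_gS_mono G t)
  unfold gC
  omega

lemma covered_or_card (t : ℕ) :
    closedNbhdF G (gS G t) = Finset.univ ∨ t ≤ (closedNbhdF G (gS G t)).card := by
  induction t with
  | zero => exact Or.inr (Nat.zero_le _)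
  | succ n ih =>
    by_cases h : closedNbhdF G (gS G n) = Finset.univ
    · left
      rw [gS_succ, greedyStep_covered G _ h]
      exact h
    · right
      rcases ih with h' | h'
      · exact absurd h' h
      · have h1 := gC_progress G n h
        have h2 := card_cnf_succ G n
        omega

lemma cnf_final : closedNbhdF G (greedyDomSet G) = Finset.univ := by
  have hgd : greedyDomSet G = gS G (Fintype.card V) := rfl
  rw [hgd]
  rcases covered_or_card G (Fintype.card V) with h | h
  · exact h
  · apply Finset.eq_univ_of_card
    have h2 := Finset.card_le_univ (closedNbhdF G (gS G (Fintype.card V)))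
    omega

lemma gS_card_le (T : ℕ) :
    (gS G T).card ≤ ∑ t ∈ Finset.range T, min 1 (gC G t).card := by
  induction T with
  | zero => simp [gS]
  | succ n ih =>
    rw [Finset.sum_range_succ]
    have hstep : (gS G (n+1)).card ≤ (gS G n).card + min 1 (gC G n).card := by
      rw [gS_succ]
      by_cases h : closedNbhdF G (gS G n) = Finset.univ
      · rw [greedyStep_covered G _ h]
        omega
      · obtain ⟨v, hv, -⟩ := greedyStep_eq_insert G _ h
        have h1 := gC_progress G n h
        have h2 : (insert v (gS G n)).card ≤ (gS G n).card + 1 :=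
          Finset.card_insert_le _ _
        rw [hv]
        omega
    omega

end Greedy

section Price
variable {V : Type} [Fintype V] [LinearOrder V] (G : SimpleGraph V)

/-- price of an element: `1/gain` at the step where it got covered -/
noncomputable def price (T : ℕ) (e : V) : ℝ :=
  ∑ t ∈ Finset.range T, if e ∈ gC G t then 1/((gC G t).card : ℝ) else 0

lemma price_nonneg (T : ℕ) (e : V) : 0 ≤ price G T e := by
  apply Finset.sum_nonneg
  intro t _
  split <;> positivity

lemma sum_price_over (A : Finset V) (T : ℕ) :
    ∑ e ∈ A, price G T e
      = ∑ t ∈ Finset.range T, ((A ∩ gC G t).card : ℝ)/((gC G t).card : ℝ) := by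
  unfold price
  rw [Finset.sum_comm]
  refine Finset.sum_congr rfl (fun t _ => ?_)
  rw [Finset.sum_ite_mem, Finset.sum_const, nsmul_eq_mul, mul_one_div]

lemma card_le_sum_price (T : ℕ) :
    ((gS G T).card : ℝ) ≤ ∑ e : V, price G T e := by
  have h2 : ∑ e : V, price G T e
      = ∑ t ∈ Finset.range T, ((min 1 (gC G t).card : ℕ) : ℝ) := by
    rw [sum_price_over]
    refine Finset.sum_congr rfl (fun t _ => ?_)
    rw [Finset.univ_inter]
    rcases Nat.eq_zero_or_pos (gC G t).card with h | h
    · simp [h]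
    · rw [div_self (by exact_mod_cast h.ne' : ((gC G t).card : ℝ) ≠ 0)]
      have : min 1 (gC G t).card = 1 := min_eq_left h
      rw [this]
      norm_num
  rw [h2]
  have h1 := gS_card_le G T
  exact_mod_cast Nat.cast_le.mpr h1 |>.trans_eq (Nat.cast_sum _ _)

lemma price_cover (d : V) (T : ℕ) :
    ∑ e ∈ closedNbhdF G {d}, price G T e
      ≤ ∑ i ∈ Finset.range (closedNbhdF G {d}).card, (1:ℝ)/(i+1) := by
  set A := closedNbhdF G {d} with hA
  set u : ℕ → ℕ := fun t => (A \ closedNbhdF G (gS G t)).card with hu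
  set H : ℕ → ℝ := fun k => ∑ i ∈ Finset.range k, (1:ℝ)/(i+1) with hH
  have hsub2 : ∀ t, A \ closedNbhdF G (gS G (t+1)) ⊆ A \ closedNbhdF G (gS G t) :=
    fun t => Finset.sdiff_subset_sdiff (Finset.Subset.refl A) (cnf_gS_mono G t)
  have hmonoU : ∀ t, u (t+1) ≤ u t := fun t => Finset.card_le_card (hsub2 t)
  have hcap : ∀ t, (A ∩ gC G t).card + u (t+1) = u t := by
    intro t
    have hset : (A \ closedNbhdF G (gS G t)) \ (A \ closedNbhdF G (gS G (t+1)))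
        = A ∩ gC G t := by
      ext e
      simp only [Finset.mem_sdiff, Finset.mem_inter, gC, not_and, not_not]
      constructor
      · rintro ⟨⟨he, hnt⟩, himp⟩
        exact ⟨he, himp he, hnt⟩
      · rintro ⟨he, ht1, hnt⟩
        exact ⟨⟨he, hnt⟩, fun _ => ht1⟩
    have hc := Finset.card_sdiff_add_card_eq_card (hsub2 t)
    rw [hset] at hc
    exact hc
  have hHnonneg : ∀ k, 0 ≤ H k := by
    intro k
    apply Finset.sum_nonneg
    intro i _
    positivity
  have hstep : ∀ t, ((A ∩ gC G t).card : ℝ)/((gC G t).card : ℝ)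
      ≤ H (u t) - H (u (t+1)) := by
    intro t
    rcases Nat.eq_zero_or_pos (u t) with h0 | hpos
    · have h1 : u (t+1) = 0 := by have := hmonoU t; omega
      have h2 : (A ∩ gC G t).card = 0 := by have := hcap t; omega
      rw [h2, h0, h1]
      simp
    · have hg : u t ≤ (gC G t).card := by
        have hgain : greedyGain G (gS G t) d = u t := by
          rw [greedyGain_eq]
        exact hgain ▸ gain_le_gC_card G t d
      have hgpos : 0 < (gC G t).card := lt_of_lt_of_le hpos hg
      have hdiff : H (u t) - H (u (t+1))
          = ∑ i ∈ Finset.Ico (u (t+1)) (u t), (1:ℝ)/(i+1) :=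
        (Finset.sum_Ico_eq_sub _ (hmonoU t)).symm
      rw [hdiff]
      have hcard : (A ∩ gC G t).card = u t - u (t+1) := by have := hcap t; omega
      calc ((A ∩ gC G t).card : ℝ)/((gC G t).card : ℝ)
          ≤ ((A ∩ gC G t).card : ℝ)/(u t : ℝ) := by
            gcongr
        _ = ∑ i ∈ Finset.Ico (u (t+1)) (u t), (1:ℝ)/(u t : ℝ) := by
            rw [Finset.sum_const, Nat.card_Ico, nsmul_eq_mul, mul_one_div, hcard]
        _ ≤ ∑ i ∈ Finset.Ico (u (t+1)) (u t), (1:ℝ)/(i+1) := by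
            apply Finset.sum_le_sum
            intro i hi
            rw [Finset.mem_Ico] at hi
            apply one_div_le_one_div_of_le
            · positivity
            · exact_mod_cast Nat.succ_le_of_lt hi.2
  have hu0 : u 0 = A.card := by
    show (A \ closedNbhdF G (gS G 0)).card = A.card
    have h0 : gS G 0 = (∅ : Finset V) := rfl
    rw [h0, cnf_empty, Finset.sdiff_empty]
  calc ∑ e ∈ A, price G T e
      = ∑ t ∈ Finset.range T, ((A ∩ gC G t).card : ℝ)/((gC G t).card : ℝ) :=
        sum_price_over G A T
    _ ≤ ∑ t ∈ Finset.range T, (H (u t) - H (u (t+1))) :=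
        Finset.sum_le_sum (fun t _ => hstep t)
    _ = H (u 0) - H (u T) := Finset.sum_range_sub' _ _
    _ ≤ H (u 0) := by have := hHnonneg (u T); linarith
    _ = ∑ i ∈ Finset.range A.card, (1:ℝ)/(i+1) := by rw [hu0]

end Price

lemma sum_biUnion_le' {α β : Type*} [DecidableEq β] (s : Finset α) (t : α → Finset β)
    (f : β → ℝ) (hf : ∀ b, 0 ≤ f b) :
    ∑ b ∈ s.biUnion t, f b ≤ ∑ a ∈ s, ∑ b ∈ t a, f b := by
  classical
  induction s using Finset.induction with
  | empty => simp
  | insert _ _ hnot ih =>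
    rename_i a s
    rw [Finset.biUnion_insert, Finset.sum_insert hnot]
    have hui : ∑ b ∈ t a ∪ s.biUnion t, f b + ∑ b ∈ t a ∩ s.biUnion t, f b
        = ∑ b ∈ t a, f b + ∑ b ∈ s.biUnion t, f b := Finset.sum_union_inter
    have hnn : 0 ≤ ∑ b ∈ t a ∩ s.biUnion t, f b :=
      Finset.sum_nonneg (fun b _ => hf b)
    have := ih
    linarith


/-- For a finite simple graph `G` with maximum degree at most `Δ` and a fixed
linear order on `V`, the greedy procedure terminates with a dominating set `S` of `G`
satisfying `|S| ≤ H(Δ+1) · γ(G)`, where `H(k) = ∑_{i=1}^{k} 1/i`. -/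
theorem stmt_8 (Δ : ℕ) (V : Type) [Fintype V] [LinearOrder V] (G : SimpleGraph V)
    (hdeg : ∀ v : V, (G.neighborSet v).ncard ≤ Δ) :
    IsDomSet G (↑(greedyDomSet G) : Set V) ∧
    ((greedyDomSet G).card : ℝ) ≤
      (∑ i ∈ Finset.range (Δ + 1), (1 : ℝ) / (i + 1)) * dominationNumber G := by
  classical
  constructor
  · intro v
    have hfin := cnf_final G
    have hv : v ∈ closedNbhdF G (greedyDomSet G) := hfin ▸ Finset.mem_univ v
    rw [mem_cnf] at hv
    rcases hv with hv | ⟨u, hu, hadj⟩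
    · exact Or.inl (by exact_mod_cast hv)
    · exact Or.inr ⟨u, by exact_mod_cast hu, hadj⟩
  · -- optimal dominating set
    have hne : {n : ℕ | ∃ S : Set V, IsDomSet G S ∧ S.ncard = n}.Nonempty :=
      ⟨(Set.univ : Set V).ncard, Set.univ, fun v => Or.inl trivial, rfl⟩
    obtain ⟨D, hD, hDcard⟩ := Nat.sInf_mem hne
    set Df := D.toFinset with hDf
    have hDfcard : Df.card = dominationNumber G := by
      rw [Set.ncard_eq_toFinset_card'] at hDcard
      exact hDcard
    set T := Fintype.card V with hT
    have hcover : (Finset.univ : Finset V) ⊆ Df.biUnion (fun d => closedNbhdF G {d}) := by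
      intro e _
      rcases hD e with he | ⟨w, hw, hadj⟩
      · exact Finset.mem_biUnion.mpr ⟨e, Set.mem_toFinset.mpr he,
          (mem_cnf G).mpr (Or.inl (Finset.mem_singleton_self e))⟩
      · exact Finset.mem_biUnion.mpr ⟨w, Set.mem_toFinset.mpr hw,
          (mem_cnf G).mpr (Or.inr ⟨w, Finset.mem_singleton_self w, hadj⟩)⟩
    have hgd : greedyDomSet G = gS G T := rfl
    have hHmono : ∀ a, a ≤ Δ + 1 →
        (∑ i ∈ Finset.range a, (1:ℝ)/(i+1))
          ≤ ∑ i ∈ Finset.range (Δ+1), (1:ℝ)/(i+1) := by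
      intro a ha
      apply Finset.sum_le_sum_of_subset_of_nonneg (Finset.range_subset_range.mpr ha)
      intro i _ _
      positivity
    calc ((greedyDomSet G).card : ℝ)
        ≤ ∑ e : V, price G T e := by rw [hgd]; exact card_le_sum_price G T
      _ ≤ ∑ e ∈ Df.biUnion (fun d => closedNbhdF G {d}), price G T e :=
          Finset.sum_le_sum_of_subset_of_nonneg hcover
            (fun e _ _ => price_nonneg G T e)
      _ ≤ ∑ d ∈ Df, ∑ e ∈ closedNbhdF G {d}, price G T e :=
          sum_biUnion_le' Df _ _ (price_nonneg G T)
      _ ≤ ∑ d ∈ Df, ∑ i ∈ Finset.range (Δ+1), (1:ℝ)/(i+1) := by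
          apply Finset.sum_le_sum
          intro d _
          exact (price_cover G d T).trans
            (hHmono _ (cnf_singleton_card G hdeg d))
      _ = (∑ i ∈ Finset.range (Δ + 1), (1 : ℝ) / (i + 1)) * dominationNumber G := by
          rw [Finset.sum_const, nsmul_eq_mul, hDfcard, mul_comm]
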